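/- Let W be a finite-dimensional real vector space with a nondegenerate symmetric bilinear form ⟨·,·⟩ of signature (4,m) with m ≥ 1. Let υ⁰, υ ∈ W satisfy ⟨υ⁰,υ⁰⟩ = ⟨υ,υ⟩ = 0 and ⟨υ⁰,υ⟩ = 1. Let x ⊆ W be a 4-dimensional subspace on which the form is positive definite, with an orthogonal decomposition x = Ω ⊕ ℧ into 2-dimensional subspaces such that ⟨z,υ⟩ = ⟨z,υ⁰⟩ = 0 for all z ∈ Ω. Then there exist ω, B ∈ υ^⊥ ∩ (υ⁰)^⊥ and V ∈ ℝ with V > 0 and ⟨ω,ω⟩ > 0 such that ℧ = span_ℝ{ ω − ⟨B,ω⟩υ , υ⁰ + B + (V − ½⟨B,B⟩)υ }. Moreover B and V are uniquely determined by ℧, and ω is unique up to a nonzero real scalar. -/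

import Mathlib

open Module Submodule

lemma stmt1_dim_le {W : Type*} [AddCommGroup W] [Module ℝ W] [FiniteDimensional ℝ W]
    {m : ℕ} (form : W →ₗ[ℝ] W →ₗ[ℝ] ℝ)
    (b : Basis (Fin 4 ⊕ Fin m) ℝ W)
    (horth : ∀ i j, i ≠ j → form (b i) (b j) = 0)
    (hneg : ∀ j : Fin m, form (b (Sum.inr j)) (b (Sum.inr j)) < 0)
    (S : Submodule ℝ W) (hS : ∀ w ∈ S, 0 ≤ form w w) :
    Module.finrank ℝ S ≤ 4 := by
  let f : W →ₗ[ℝ] (Fin 4 → ℝ) :=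
    { toFun := fun w i => b.repr w (Sum.inl i)
      map_add' := by intro u v; ext i; simp
      map_smul' := by intro c u; ext i; simp }
  have key : ∀ s : W, s ∈ S → (∀ i, b.repr s (Sum.inl i) = 0) → s = 0 := by
    intro s hsS hc
    have hrepr : s = ∑ k, b.repr s k • b k := (b.sum_repr s).symm
    have hform : form s s = ∑ k, b.repr s k * b.repr s k * form (b k) (b k) := by
      conv_lhs => rw [hrepr]
      rw [map_sum]
      refine Finset.sum_congr rfl fun k _ => ?_
      simp only [map_sum, map_smul, LinearMap.sum_apply, LinearMap.smul_apply, smul_eq_mul]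
      rw [Finset.sum_eq_single k]
      · ring
      · intro l _ hlk; rw [horth l k hlk]; ring
      · intro h; exact absurd (Finset.mem_univ k) h
    rw [Fintype.sum_sum_type] at hform
    have h1 : ∑ i : Fin 4, b.repr s (Sum.inl i) * b.repr s (Sum.inl i) * form (b (Sum.inl i)) (b (Sum.inl i)) = 0 := by
      apply Finset.sum_eq_zero; intro i _; rw [hc i]; ring
    rw [h1, zero_add] at hform
    have hle : ∀ j ∈ Finset.univ, b.repr s (Sum.inr j) * b.repr s (Sum.inr j) * form (b (Sum.inr j)) (b (Sum.inr j)) ≤ 0 := by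
      intro j _
      have := hneg j
      nlinarith [mul_self_nonneg (b.repr s (Sum.inr j))]
    have hzero : ∀ j ∈ Finset.univ, b.repr s (Sum.inr j) * b.repr s (Sum.inr j) * form (b (Sum.inr j)) (b (Sum.inr j)) = 0 := by
      rw [← Finset.sum_eq_zero_iff_of_nonpos hle]
      have := hS s hsS
      have h2 : form s s ≤ 0 := hform ▸ Finset.sum_nonpos hle
      linarith
    have hcr : ∀ j, b.repr s (Sum.inr j) = 0 := by
      intro j
      have h3 := hzero j (Finset.mem_univ j)
      have hj := hneg j
      rcases mul_eq_zero.mp h3 with h | h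
      · exact mul_self_eq_zero.mp h
      · exact absurd h (ne_of_lt hj)
    have : b.repr s = 0 := by
      ext k
      cases k with
      | inl i => simpa using hc i
      | inr j => simpa using hcr j
    have := b.repr.injective (by simpa using this)
    simpa using this
  have hinj : Function.Injective (f ∘ₗ S.subtype) := by
    rw [← LinearMap.ker_eq_bot, LinearMap.ker_eq_bot']
    intro s hs
    have : ∀ i, b.repr (s : W) (Sum.inl i) = 0 := by
      intro i
      have := congrFun (show f (s : W) = 0 from hs) i
      simpa [f] using this
    exact Subtype.ext (key s s.2 this)
  have := LinearMap.finrank_le_finrank_of_injective hinj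
  simpa using this

/-- Let `W` be a finite-dimensional real vector space with a nondegenerate
symmetric bilinear form of signature `(4,m)`, `m ≥ 1` (witnessed by an orthogonal basis with
4 vectors of positive square and `m` of negative square).  Let `υ⁰, υ ∈ W` be isotropic with
`⟨υ⁰,υ⟩ = 1`, and let `x = Ω ⊥ ℧` be a positive definite 4-dimensional subspace decomposed
orthogonally into 2-dimensional subspaces with `Ω ⊥ υ⁰, υ`.  Then there are
`ω, B ∈ υ^⊥ ∩ (υ⁰)^⊥` and `V > 0` with `⟨ω,ω⟩ > 0` such that
`℧ = span{ω − ⟨B,ω⟩υ, υ⁰ + B + (V − ½⟨B,B⟩)υ}`; moreover `B` and `V` are uniquely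
determined and `ω` is unique up to a nonzero real scalar. -/
theorem stmt1
    {W : Type*} [AddCommGroup W] [Module ℝ W] [FiniteDimensional ℝ W]
    (m : ℕ) (hm : 1 ≤ m)
    (form : W →ₗ[ℝ] W →ₗ[ℝ] ℝ)
    (hsymm : ∀ x y : W, form x y = form y x)
    (hsig : ∃ b : Basis (Fin 4 ⊕ Fin m) ℝ W,
      (∀ i j, i ≠ j → form (b i) (b j) = 0) ∧
      (∀ i : Fin 4, 0 < form (b (Sum.inl i)) (b (Sum.inl i))) ∧
      (∀ j : Fin m, form (b (Sum.inr j)) (b (Sum.inr j)) < 0))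
    (υ0 υ : W)
    (hυ0 : form υ0 υ0 = 0) (hυ : form υ υ = 0) (hpair : form υ0 υ = 1)
    (x Ω ℧ : Submodule ℝ W)
    (hxpos : ∀ w ∈ x, w ≠ 0 → 0 < form w w)
    (hxdim : Module.finrank ℝ ↥x = 4)
    (hΩdim : Module.finrank ℝ ↥Ω = 2)
    (h℧dim : Module.finrank ℝ ↥℧ = 2)
    (hΩx : Ω ≤ x) (h℧x : ℧ ≤ x)
    (hdecomp : Ω ⊔ ℧ = x)
    (horth : ∀ z ∈ Ω, ∀ w ∈ ℧, form z w = 0)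
    (hΩυ : ∀ z ∈ Ω, form z υ = 0) (hΩυ0 : ∀ z ∈ Ω, form z υ0 = 0) :
    ∃ ω B : W, ∃ V : ℝ,
      form ω υ = 0 ∧ form ω υ0 = 0 ∧ form B υ = 0 ∧ form B υ0 = 0 ∧
      0 < V ∧ 0 < form ω ω ∧
      ℧ = Submodule.span ℝ
        ({ω - (form B ω) • υ, υ0 + B + (V - (1/2 : ℝ) * form B B) • υ} : Set W) ∧
      (∀ ω' B' : W, ∀ V' : ℝ,
        form ω' υ = 0 → form ω' υ0 = 0 → form B' υ = 0 → form B' υ0 = 0 →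
        0 < V' → 0 < form ω' ω' →
        ℧ = Submodule.span ℝ
          ({ω' - (form B' ω') • υ, υ0 + B' + (V' - (1/2 : ℝ) * form B' B') • υ} : Set W) →
        B' = B ∧ V' = V ∧ ∃ c : ℝ, c ≠ 0 ∧ ω' = c • ω) := by
  obtain ⟨b, hbo, hbp, hbn⟩ := hsig
  have hpair' : form υ υ0 = 1 := (hsymm υ υ0).trans hpair
  have hυne : υ ≠ 0 := by
    intro h; rw [h] at hpair; simp at hpair
  -- Step 1: there is e ∈ ℧ with form e υ ≠ 0
  have hexist : ∃ e ∈ ℧, form e υ ≠ 0 := by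
    by_contra hcon
    push_neg at hcon
    have hxυ : ∀ w ∈ x, form w υ = 0 := by
      intro w hw
      rw [← hdecomp] at hw
      obtain ⟨z, hz, u, hu, rfl⟩ := Submodule.mem_sup.mp hw
      rw [map_add, LinearMap.add_apply, hΩυ z hz, hcon u hu, add_zero]
    have hinf : x ⊓ Submodule.span ℝ {υ} = ⊥ := by
      rw [eq_bot_iff]
      rintro w ⟨hwx, hws⟩
      obtain ⟨t, rfl⟩ := Submodule.mem_span_singleton.mp hws
      rcases eq_or_ne t 0 with rfl | ht
      · simp
      · exfalso
        have hne : t • υ ≠ 0 := smul_ne_zero ht hυne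
        have := hxpos _ hwx hne
        have h0 : form (t • υ) (t • υ) = 0 := by
          simp only [map_smul, LinearMap.smul_apply, smul_eq_mul, hυ]; ring
        rw [h0] at this; exact lt_irrefl 0 this
    have hnn : ∀ w ∈ x ⊔ Submodule.span ℝ {υ}, 0 ≤ form w w := by
      intro w hw
      obtain ⟨y, hy, z, hz, rfl⟩ := Submodule.mem_sup.mp hw
      obtain ⟨t, rfl⟩ := Submodule.mem_span_singleton.mp hz
      have h1 := hxυ y hy
      have h2 : form υ y = 0 := (hsymm υ y).trans h1
      have h3 : form (y + t • υ) (y + t • υ) = form y y := by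
        simp only [map_add, map_smul, LinearMap.add_apply, LinearMap.smul_apply,
          smul_eq_mul, h1, h2, hυ]
        ring
      rw [h3]
      rcases eq_or_ne y 0 with rfl | hy0
      · simp
      · exact le_of_lt (hxpos y hy hy0)
    have hle4 := stmt1_dim_le form b hbo hbn _ hnn
    have hrank : finrank ℝ ↥(x ⊔ Submodule.span ℝ {υ}) = 5 := by
      have := Submodule.finrank_sup_add_finrank_inf_eq x (Submodule.span ℝ {υ})
      rw [hinf, hxdim, finrank_span_singleton hυne] at this
      simpa using this
    omega
  obtain ⟨e, he℧, heυ⟩ := hexist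
  -- normalize
  set e2'' : W := (form e υ)⁻¹ • e with he2''def
  have he2''℧ : e2'' ∈ ℧ := Submodule.smul_mem _ _ he℧
  have he2''υ : form e2'' υ = 1 := by
    rw [he2''def]
    simp only [map_smul, LinearMap.smul_apply, smul_eq_mul]
    field_simp
  -- find w ∈ ℧ not in span{e2''}
  have he2''ne : e2'' ≠ 0 := by
    intro h; rw [h] at he2''υ; simp at he2''υ
  have hnotle : ¬ (℧ ≤ Submodule.span ℝ {e2''}) := by
    intro hle
    have h1 := Submodule.finrank_mono hle
    rw [h℧dim, finrank_span_singleton he2''ne] at h1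
    omega
  obtain ⟨w, hw℧, hwns⟩ := SetLike.not_le_iff_exists.mp hnotle
  set e1 : W := w - (form w υ) • e2'' with he1def
  have he1℧ : e1 ∈ ℧ := Submodule.sub_mem _ hw℧ (Submodule.smul_mem _ _ he2''℧)
  have he1υ : form e1 υ = 0 := by
    rw [he1def]
    simp only [map_sub, map_smul, LinearMap.sub_apply, LinearMap.smul_apply, smul_eq_mul, he2''υ]
    ring
  have he1ne : e1 ≠ 0 := by
    intro h
    apply hwns
    rw [Submodule.mem_span_singleton]
    rw [he1def] at h
    exact ⟨form w υ, (sub_eq_zero.mp h).symm⟩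
  have he1e1 : 0 < form e1 e1 := hxpos e1 (h℧x he1℧) he1ne
  set e2 : W := e2'' - (form e2'' e1 / form e1 e1) • e1 with he2def
  have he2℧ : e2 ∈ ℧ := Submodule.sub_mem _ he2''℧ (Submodule.smul_mem _ _ he1℧)
  have he2υ : form e2 υ = 1 := by
    rw [he2def]
    simp only [map_sub, map_smul, LinearMap.sub_apply, LinearMap.smul_apply, smul_eq_mul,
      he2''υ, he1υ]
    ring
  have he2e1 : form e2 e1 = 0 := by
    rw [he2def]
    simp only [map_sub, map_smul, LinearMap.sub_apply, LinearMap.smul_apply, smul_eq_mul]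
    field_simp
    ring
  have he2ne : e2 ≠ 0 := by
    intro h; rw [h] at he2υ; simp at he2υ
  have he2e2 : 0 < form e2 e2 := hxpos e2 (h℧x he2℧) he2ne
  -- define B, V, ω
  set b2 : ℝ := form e2 υ0 with hb2def
  set B : W := e2 - υ0 - b2 • υ with hBdef
  set V : ℝ := (1/2) * form e2 e2 with hVdef
  set ω : W := e1 - (form e1 υ0) • υ with hωdef
  have hυ0e2 : form υ0 e2 = b2 := (hsymm υ0 e2).trans hb2def.symm
  have hυe2 : form υ e2 = 1 := (hsymm υ e2).trans he2υ
  have hυe1 : form υ e1 = 0 := (hsymm υ e1).trans he1υ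
  have hυ0e1 : form υ0 e1 = form e1 υ0 := hsymm υ0 e1
  have hBυ : form B υ = 0 := by
    rw [hBdef]
    simp only [map_sub, map_smul, LinearMap.sub_apply, LinearMap.smul_apply, smul_eq_mul,
      he2υ, hpair, hυ]
    ring
  have hBυ0 : form B υ0 = 0 := by
    rw [hBdef]
    simp only [map_sub, map_smul, LinearMap.sub_apply, LinearMap.smul_apply, smul_eq_mul,
      hυ0, hpair']
    rw [← hb2def]
    ring
  have hBB : form B B = form e2 e2 - 2 * b2 := by
    rw [hBdef]
    simp only [map_sub, map_smul, LinearMap.sub_apply, LinearMap.smul_apply, smul_eq_mul,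
      hυ0, hυ, hpair, hpair', hυ0e2, hυe2, he2υ]
    rw [← hb2def]
    ring
  have hcoef : V - (1/2 : ℝ) * form B B = b2 := by rw [hBB, hVdef]; ring
  have he2eq : υ0 + B + (V - (1/2 : ℝ) * form B B) • υ = e2 := by
    rw [hcoef, hBdef]; module
  have hωυ : form ω υ = 0 := by
    rw [hωdef]
    simp only [map_sub, map_smul, LinearMap.sub_apply, LinearMap.smul_apply, smul_eq_mul,
      he1υ, hυ]
    ring
  have hωυ0 : form ω υ0 = 0 := by
    rw [hωdef]
    simp only [map_sub, map_smul, LinearMap.sub_apply, LinearMap.smul_apply, smul_eq_mul,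
      hpair']
    ring
  have hωω : form ω ω = form e1 e1 := by
    rw [hωdef]
    simp only [map_sub, map_smul, LinearMap.sub_apply, LinearMap.smul_apply, smul_eq_mul,
      he1υ, hυe1, hυ]
    ring
  have hBω : form B ω = -(form e1 υ0) := by
    rw [hBdef, hωdef]
    simp only [map_sub, map_smul, LinearMap.sub_apply, LinearMap.smul_apply, smul_eq_mul,
      he2e1, he2υ, hυ0e1, hpair, hυe1, hυ, hυ0]
    ring
  have he1eq : ω - (form B ω) • υ = e1 := by
    rw [hBω, hωdef]; module
  have hVpos : 0 < V := by rw [hVdef]; linarith only [he2e2]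
  have hωωpos : 0 < form ω ω := by rw [hωω]; exact he1e1
  -- the span
  have hspan : ℧ = Submodule.span ℝ ({e1, e2} : Set W) := by
    have hle : Submodule.span ℝ ({e1, e2} : Set W) ≤ ℧ := by
      rw [Submodule.span_le]
      intro z hz
      rcases Set.mem_insert_iff.mp hz with rfl | hz
      · exact he1℧
      · rw [Set.mem_singleton_iff.mp hz]; exact he2℧
    have hli : LinearIndependent ℝ ![e1, e2] := by
      rw [LinearIndependent.pair_iff]
      intro s t hst
      have ht : t = 0 := by
        have := congrArg (fun z => form z υ) hst
        simpa [map_add, map_smul, LinearMap.add_apply, LinearMap.smul_apply, smul_eq_mul,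
          he1υ, he2υ] using this
      subst ht
      rw [zero_smul, add_zero] at hst
      have hs : s = 0 := by
        rcases smul_eq_zero.mp hst with h | h
        · exact h
        · exact absurd h he1ne
      exact ⟨hs, rfl⟩
    have hrk : finrank ℝ ↥(Submodule.span ℝ ({e1, e2} : Set W)) = 2 := by
      have h1 : Set.range ![e1, e2] = ({e1, e2} : Set W) := by
        simp [Matrix.range_cons, Matrix.range_empty, Set.pair_comm]
      have := finrank_span_eq_card hli
      rw [h1] at this
      simpa using this
    exact (Submodule.eq_of_le_of_finrank_le hle (by rw [h℧dim, hrk])).symm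
  refine ⟨ω, B, V, hωυ, hωυ0, hBυ, hBυ0, hVpos, hωωpos, ?_, ?_⟩
  · rw [hspan, he1eq, he2eq]
  -- uniqueness
  intro ω' B' V' h1 h2 h3 h4 hV' hω'ω' hsp
  set d : ℝ := form B' ω' with hddef
  set c' : ℝ := V' - (1/2 : ℝ) * form B' B' with hc'def
  set f1 : W := ω' - d • υ with hf1def
  set f2 : W := υ0 + B' + c' • υ with hf2def
  have hυω' : form υ ω' = 0 := (hsymm υ ω').trans h1
  have hυ0ω' : form υ0 ω' = 0 := (hsymm υ0 ω').trans h2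
  have hυB' : form υ B' = 0 := (hsymm υ B').trans h3
  have hυ0B' : form υ0 B' = 0 := (hsymm υ0 B').trans h4
  have hf1υ : form f1 υ = 0 := by
    rw [hf1def]
    simp only [map_sub, map_smul, LinearMap.sub_apply, LinearMap.smul_apply, smul_eq_mul,
      h1, hυ]
    ring
  have hf2υ : form f2 υ = 1 := by
    rw [hf2def]
    simp only [map_add, map_smul, LinearMap.add_apply, LinearMap.smul_apply, smul_eq_mul,
      hpair, h3, hυ]
    ring
  have hf2f1 : form f2 f1 = 0 := by
    rw [hf1def, hf2def]
    simp only [map_add, map_sub, map_smul, LinearMap.add_apply, LinearMap.sub_apply,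
      LinearMap.smul_apply, smul_eq_mul, hυ0ω', hpair, h3, hυω', hυ, ← hddef]
    ring
  have hf1f1 : form f1 f1 = form ω' ω' := by
    rw [hf1def]
    simp only [map_sub, map_smul, LinearMap.sub_apply, LinearMap.smul_apply, smul_eq_mul,
      h1, hυω', hυ]
    ring
  have he1mem : e1 ∈ Submodule.span ℝ ({f1, f2} : Set W) := by
    rw [hf1def, hf2def, ← hsp]; exact he1℧
  have he2mem : e2 ∈ Submodule.span ℝ ({f1, f2} : Set W) := by
    rw [hf1def, hf2def, ← hsp]; exact he2℧
  obtain ⟨s, t, hst⟩ := Submodule.mem_span_pair.mp he1mem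
  obtain ⟨p, q, hpq⟩ := Submodule.mem_span_pair.mp he2mem
  have ht0 : t = 0 := by
    have := congrArg (fun z => form z υ) hst
    simpa [map_add, map_smul, LinearMap.add_apply, LinearMap.smul_apply, smul_eq_mul,
      hf1υ, hf2υ, he1υ] using this
  have hq1 : q = 1 := by
    have := congrArg (fun z => form z υ) hpq
    simpa [map_add, map_smul, LinearMap.add_apply, LinearMap.smul_apply, smul_eq_mul,
      hf1υ, hf2υ, he2υ] using this
  subst ht0; subst hq1
  rw [zero_smul, add_zero] at hst
  rw [one_smul] at hpq
  have hs0 : s ≠ 0 := by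
    intro h; rw [h, zero_smul] at hst; exact he1ne hst.symm
  have hp0 : p = 0 := by
    have hc := he2e1
    rw [← hpq, ← hst] at hc
    simp only [map_add, map_smul, LinearMap.add_apply, LinearMap.smul_apply, smul_eq_mul,
      hf2f1, hf1f1] at hc
    rcases mul_eq_zero.mp (by linarith only [hc] : p * (s * form ω' ω') = 0) with h | h
    · exact h
    · rcases mul_eq_zero.mp h with h' | h'
      · exact absurd h' hs0
      · exact absurd h' (ne_of_gt hω'ω')
  rw [hp0, zero_smul, zero_add] at hpq
  -- f2 = e2, deduce B' = B, c' = b2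
  have heq2 : υ0 + B' + c' • υ = υ0 + B + b2 • υ := by
    rw [← hf2def, hpq, ← he2eq, hcoef]
  have hdiff : B' - B + (c' - b2) • υ = 0 := by
    have h5 : B' - B + (c' - b2) • υ = (υ0 + B' + c' • υ) - (υ0 + B + b2 • υ) := by module
    rw [heq2, sub_self] at h5
    exact h5
  have hcb : c' - b2 = 0 := by
    have := congrArg (fun z => form z υ0) hdiff
    simpa [map_add, map_sub, map_smul, LinearMap.add_apply, LinearMap.sub_apply,
      LinearMap.smul_apply, smul_eq_mul, h4, hBυ0, hpair'] using this
  have hBB' : B' = B := by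
    rw [hcb, zero_smul, add_zero, sub_eq_zero] at hdiff
    exact hdiff
  have hVV' : V' = V := by
    have : c' = b2 := by linarith only [hcb]
    rw [hc'def] at this
    rw [hBB'] at this
    rw [← hcoef] at this
    linarith only [this]
  refine ⟨hBB', hVV', s⁻¹, inv_ne_zero hs0, ?_⟩
  -- ω = s • ω'
  have hωs : ω - s • ω' + (s * d - form B ω) • υ = 0 := by
    have h5 : ω - s • ω' + (s * d - form B ω) • υ =
        (ω - (form B ω) • υ) - s • (ω' - d • υ) := by module
    rw [he1eq, ← hf1def, ← hst, sub_self] at h5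
    exact h5
  have hcoef2 : s * d - form B ω = 0 := by
    have := congrArg (fun z => form z υ0) hωs
    simpa [map_add, map_sub, map_smul, LinearMap.add_apply, LinearMap.sub_apply,
      LinearMap.smul_apply, smul_eq_mul, hωυ0, h2, hpair'] using this
  have hωeq : ω = s • ω' := by
    rw [hcoef2, zero_smul, add_zero, sub_eq_zero] at hωs
    exact hωs
  rw [hωeq, smul_smul, inv_mul_cancel₀ hs0, one_smul]
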